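/- Let q : ℝ → ℝ be twice differentiable and satisfy the Painlevé II equation q''(x) = 2 q(x)³ + x q(x) for all x ∈ ℝ, and suppose that q(x) → 0, q'(x) → 0, and x·q(x)² → 0 as x → +∞. Then for every x ∈ ℝ the function s ↦ q(s)² is integrable on [x, ∞) and ∫_x^∞ q(s)² ds = q'(x)² − q(x)⁴ − x q(x)²; equivalently, p(x) := ∫_∞^x q(y)² dy = q(x)⁴ + x q(x)² − q'(x)². -/

import Mathlib

open MeasureTheory Filter

/-- If `q` solves the Painlevé II equation and `q`, `q'`, `x q(x)^2` vanish at `+∞`,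
then `q^2` is integrable on `[x, ∞)` and
`∫_x^∞ q(s)^2 ds = q'(x)^2 - q(x)^4 - x q(x)^2`. -/
theorem stmt11 (q q' q'' : ℝ → ℝ)
    (hq' : ∀ x, HasDerivAt q (q' x) x)
    (hq'' : ∀ x, HasDerivAt q' (q'' x) x)
    (hPII : ∀ x, q'' x = 2 * q x ^ 3 + x * q x)
    (hq0 : Tendsto q atTop (nhds 0))
    (hq'0 : Tendsto q' atTop (nhds 0))
    (hxq0 : Tendsto (fun x => x * q x ^ 2) atTop (nhds 0)) :
    ∀ x : ℝ, IntegrableOn (fun s => q s ^ 2) (Set.Ici x) ∧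
      ∫ s in Set.Ici x, q s ^ 2 = q' x ^ 2 - q x ^ 4 - x * q x ^ 2 := by
  set g : ℝ → ℝ := fun x => -(q' x ^ 2 - q x ^ 4 - x * q x ^ 2) with hg
  have hderiv : ∀ x : ℝ, HasDerivAt g (q x ^ 2) x := by
    intro x
    have h := ((((hq'' x).pow 2).sub ((hq' x).pow 4)).sub
        ((hasDerivAt_id x).mul ((hq' x).pow 2))).neg
    convert h using 1
    · rfl
    · rfl
    · rfl
    rw [hPII x]; push_cast; simp only [id, Pi.pow_apply]; ring
  have hlim : Tendsto g atTop (nhds 0) := by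
    have : Tendsto (fun x => -(q' x ^ 2 - q x ^ 4 - x * q x ^ 2)) atTop
        (nhds (-(0 ^ 2 - 0 ^ 4 - 0))) := by
      exact (((hq'0.pow 2).sub (hq0.pow 4)).sub hxq0).neg
    rw [show (-((0:ℝ) ^ 2 - 0 ^ 4 - 0)) = 0 from by norm_num] at this
    exact this
  intro x
  have hint : IntegrableOn (fun s => q s ^ 2) (Set.Ioi x) :=
    integrableOn_Ioi_deriv_of_nonneg' (fun y _ => hderiv y)
      (fun y _ => sq_nonneg _) hlim
  have hval : ∫ s in Set.Ioi x, q s ^ 2 = 0 - g x :=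
    integral_Ioi_of_hasDerivAt_of_nonneg' (fun y _ => hderiv y)
      (fun y _ => sq_nonneg _) hlim
  refine ⟨(integrableOn_Ici_iff_integrableOn_Ioi).2 hint, ?_⟩
  rw [integral_Ici_eq_integral_Ioi, hval, hg]; ring
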